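/- The set U := { u ∈ w^∞_{p,s,a} : inf_{j∈ℤ} ⟨j⟩^p e^{a|j|+s⟨j⟩^θ} |u_j| > 0 } is open and dense in w^∞_{p,s,a}. -/

import Mathlib

open scoped ENNReal BigOperators Classical

noncomputable section

/-- Multi-indices: finitely supported functions `ℤ → ℕ`. -/
abbrev MIdx := ℤ →₀ ℕ

/-- Total degree `|α| = Σ_j α_j`. -/
def deg (α : MIdx) : ℕ := ∑ j ∈ α.support, α j

/-- Momentum `π(α - β) = Σ_j j (α_j - β_j)`. -/
def mom (α β : MIdx) : ℤ :=
  ∑ j ∈ α.support ∪ β.support, j * ((α j : ℤ) - (β j : ℤ))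

/-- `⟨j⟩ = max(|j|, 1)` as a real number. -/
def jb (j : ℤ) : ℝ := max |(j : ℝ)| 1

/-- The weight `u₀(r)_j = r ⟨j⟩^{-p} e^{-(a|j| + s ⟨j⟩^θ)}`. -/
def u0 (θ p a r s : ℝ) (j : ℤ) : ℝ :=
  r * (jb j ^ p * Real.exp (a * |(j : ℝ)| + s * jb j ^ θ))⁻¹

/-- The coefficient weight `c^{(j)}_{r,s,η}(α,β) = u₀^{α+β-2e_j} e^{η |π(α-β)|}`. -/
def cwt (θ p a r s η : ℝ) (j : ℤ) (α β : MIdx) : ℝ :=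
  (∏ i ∈ insert j (α.support ∪ β.support),
      u0 θ p a r s i ^ (((α i : ℤ) + (β i : ℤ)) - if i = j then 2 else 0)) *
    Real.exp (η * |(mom α β : ℝ)|)

/-- The majorant norm `|H|_{r,s,η} = sup_j Σ_{α,β} |H_{α,β}| β_j u₀^{α+β-2e_j} e^{η|π(α-β)|}`
(with values in `ℝ≥0∞`). -/
def hnorm (θ p a r s η : ℝ) (H : MIdx → MIdx → ℂ) : ℝ≥0∞ :=
  ⨆ j : ℤ, ∑' q : MIdx × MIdx,
    ENNReal.ofReal (‖H q.1 q.2‖ * (q.2 j : ℝ) * cwt θ p a r s η j q.1 q.2)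

/-- A family of coefficients is a Hamiltonian: mass conservation (`H_{α,β} = 0` unless
`|α| = |β|`) and the reality condition `H_{β,α} = conj (H_{α,β})`. -/
def IsHam (H : MIdx → MIdx → ℂ) : Prop :=
  (∀ α β : MIdx, deg α ≠ deg β → H α β = 0) ∧
  (∀ α β : MIdx, H β α = (starRingEnd ℂ) (H α β))

/-- The set `D_γ` of `γ`-Diophantine frequencies. -/
def Dio (γ : ℝ) : Set (ℤ → ℝ) :=
  {ω | (∀ j : ℤ, |ω j - (j : ℝ) ^ 2| ≤ 1 / 2) ∧
    ∀ ℓ : ℤ →₀ ℤ, ℓ ≠ 0 →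
      γ * ∏ n ∈ ℓ.support, (1 + (ℓ n : ℝ) ^ 2 * jb n ^ 2)⁻¹ <
        |∑ j ∈ ℓ.support, ω j * (ℓ j : ℝ)|}

/-- The sup distance `|ω - ω'|_∞` (with values in `ℝ≥0∞`). -/
def dsup (ω ω' : ℤ → ℝ) : ℝ≥0∞ := ⨆ j : ℤ, ENNReal.ofReal |ω j - ω' j|

/-- The weighted Lipschitz norm
`‖H‖_{r,s,η} = sup_{ω ∈ D_γ} |H(ω)|_{r,s,η} + γ sup_{ω≠ω'} |H(ω)-H(ω')|_{r,s,η} / |ω-ω'|_∞`. -/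
def hnormLip (γ θ p a r s η : ℝ) (H : (ℤ → ℝ) → MIdx → MIdx → ℂ) : ℝ≥0∞ :=
  (⨆ ω ∈ Dio γ, hnorm θ p a r s η (H ω)) +
    ENNReal.ofReal γ *
      ⨆ ω ∈ Dio γ, ⨆ ω' ∈ Dio γ,
        hnorm θ p a r s η (fun α β => H ω α β - H ω' α β) / dsup ω ω'
/-- Weighted sup norm of a sequence: `|u|_{p,s,a} = sup_j |u_j| ⟨j⟩^p e^{a|j| + s⟨j⟩^θ}`
(with values in `ℝ≥0∞`). -/
def wnorm (θ p s a : ℝ) (u : ℤ → ℂ) : ℝ≥0∞ :=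
  ⨆ j : ℤ, ENNReal.ofReal (‖u j‖ * (jb j ^ p * Real.exp (a * |(j : ℝ)| + s * jb j ^ θ)))

/-- The monomial `u^α ū^β`. -/
def mono (u : ℤ → ℂ) (α β : MIdx) : ℂ :=
  (∏ j ∈ α.support, u j ^ α j) * ∏ j ∈ β.support, (starRingEnd ℂ) (u j) ^ β j

/-- Evaluation of a Hamiltonian given by coefficients: `H(u) = Σ_{α,β} H_{α,β} u^α ū^β`. -/
def heval (H : MIdx → MIdx → ℂ) (u : ℤ → ℂ) : ℂ :=
  ∑' q : MIdx × MIdx, H q.1 q.2 * mono u q.1 q.2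

/-- The `j`-th component of the Hamiltonian vector field:
`X_H^{(j)}(u) = i ∂H/∂ū_j = i Σ_{α,β} H_{α,β} β_j u^α ū^{β - e_j}`. -/
def hvf (H : MIdx → MIdx → ℂ) (u : ℤ → ℂ) (j : ℤ) : ℂ :=
  Complex.I * ∑' q : MIdx × MIdx,
    H q.1 q.2 * (q.2 j : ℂ) * mono u q.1 (q.2 - Finsupp.single j 1)

/-- A map of sequence space is (majorant) analytic on the closed ball of radius `R`:
each component is the sum of a convergent power series in `(u, ū)`. -/
def AnalyticOnBall (θ p s a : ℝ) (Φ : (ℤ → ℂ) → ℤ → ℂ) (R : ℝ) : Prop :=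
  ∃ c : ℤ → MIdx → MIdx → ℂ,
    ∀ u : ℤ → ℂ, wnorm θ p s a u ≤ ENNReal.ofReal R → ∀ j : ℤ,
      HasSum (fun q : MIdx × MIdx => c j q.1 q.2 * mono u q.1 q.2) (Φ u j)

/-- The symplectic form `Ω(u,v) = Im Σ_j u_j conj(v_j)`. -/
def sympForm (u v : ℤ → ℂ) : ℝ := (∑' j : ℤ, u j * (starRingEnd ℂ) (v j)).im

/-- Directional (Gateaux) derivative of a map of sequence space. -/
def dmap (Φ : (ℤ → ℂ) → ℤ → ℂ) (u v : ℤ → ℂ) (j : ℤ) : ℂ :=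
  deriv (fun t : ℝ => Φ (fun k => u k + (t : ℂ) * v k) j) 0

/-- A map is symplectic on the closed ball of radius `R`: its differential preserves the
symplectic form (tested on finitely supported tangent vectors). -/
def SymplecticOnBall (θ p s a : ℝ) (Φ : (ℤ → ℂ) → ℤ → ℂ) (R : ℝ) : Prop :=
  ∀ u : ℤ → ℂ, wnorm θ p s a u ≤ ENNReal.ofReal R →
    ∀ v w : ℤ → ℂ, (Function.support v).Finite → (Function.support w).Finite →
      sympForm (dmap Φ u v) (dmap Φ u w) = sympForm v w

/-- The set `U = {u ∈ w^∞_{p,s,a} : inf_j ⟨j⟩^p e^{a|j|+s⟨j⟩^θ} |u_j| > 0}`. -/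
def lowerBddSet (θ p s a : ℝ) : Set (ℤ → ℂ) :=
  {u | wnorm θ p s a u ≠ ⊤ ∧
    0 < ⨅ j : ℤ, ENNReal.ofReal
      (‖u j‖ * (jb j ^ p * Real.exp (a * |(j : ℝ)| + s * jb j ^ θ)))}

/-- The weight. -/
def Wt (θ p s a : ℝ) (j : ℤ) : ℝ :=
  jb j ^ p * Real.exp (a * |(j : ℝ)| + s * jb j ^ θ)

lemma Wt_pos (θ p s a : ℝ) (j : ℤ) : 0 < Wt θ p s a j :=
  mul_pos (Real.rpow_pos_of_pos (lt_of_lt_of_le one_pos (le_max_right _ _)) p)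
    (Real.exp_pos _)

lemma wnorm_eq (θ p s a : ℝ) (u : ℤ → ℂ) :
    wnorm θ p s a u = ⨆ j : ℤ, ENNReal.ofReal (‖u j‖ * Wt θ p s a j) := rfl

lemma mem_lowerBddSet_iff (θ p s a : ℝ) (u : ℤ → ℂ) :
    u ∈ lowerBddSet θ p s a ↔ wnorm θ p s a u ≠ ⊤ ∧
      0 < ⨅ j : ℤ, ENNReal.ofReal (‖u j‖ * Wt θ p s a j) := Iff.rfl

lemma lbs_tri (x y : ℂ) (W : ℝ) (hW : 0 ≤ W) :
    ENNReal.ofReal (‖x‖ * W) ≤ ENNReal.ofReal (‖y‖ * W) + ENNReal.ofReal (‖x - y‖ * W) := by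
  rw [← ENNReal.ofReal_add (by positivity) (by positivity)]
  apply ENNReal.ofReal_le_ofReal
  rw [← add_mul]
  have h : ‖x‖ - ‖y‖ ≤ ‖x - y‖ := norm_sub_norm_le x y
  nlinarith [norm_nonneg (x - y)]

theorem lowerBddSet_open_dense
    (θ p s a : ℝ) (hθ0 : 0 < θ) (hθ1 : θ < 1) (hp : 1 < p) (hs : 0 < s) (ha : 0 ≤ a) :
    (∀ u ∈ lowerBddSet θ p s a, ∃ ε : ℝ, 0 < ε ∧
      ∀ v : ℤ → ℂ, wnorm θ p s a (fun j => v j - u j) ≤ ENNReal.ofReal ε →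
        v ∈ lowerBddSet θ p s a) ∧
    (∀ u : ℤ → ℂ, wnorm θ p s a u ≠ ⊤ → ∀ ε : ℝ, 0 < ε →
      ∃ v ∈ lowerBddSet θ p s a,
        wnorm θ p s a (fun j => v j - u j) ≤ ENNReal.ofReal ε) := by
  constructor
  · -- openness
    rintro u ⟨hufin, hupos⟩
    obtain ⟨r, -, hr0, hrm⟩ := ENNReal.lt_iff_exists_real_btwn.mp
      (show (0:ℝ≥0∞) < ⨅ j : ℤ, ENNReal.ofReal (‖u j‖ * Wt θ p s a j) from hupos)
    refine ⟨r, ENNReal.ofReal_pos.mp hr0, fun v hv => ?_⟩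
    have htermv : ∀ j : ℤ, ENNReal.ofReal (‖v j‖ * Wt θ p s a j) ≤
        wnorm θ p s a u + ENNReal.ofReal r := by
      intro j
      calc ENNReal.ofReal (‖v j‖ * Wt θ p s a j)
          ≤ ENNReal.ofReal (‖u j‖ * Wt θ p s a j)
            + ENNReal.ofReal (‖v j - u j‖ * Wt θ p s a j) :=
            lbs_tri _ _ _ (Wt_pos θ p s a j).le
        _ ≤ wnorm θ p s a u + ENNReal.ofReal r := by
            refine add_le_add ?_ ?_
            · rw [wnorm_eq]; exact le_iSup (fun j => ENNReal.ofReal (‖u j‖ * Wt θ p s a j)) j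
            · refine le_trans ?_ hv
              rw [wnorm_eq]
              exact le_iSup (fun j => ENNReal.ofReal (‖v j - u j‖ * Wt θ p s a j)) j
    refine (mem_lowerBddSet_iff θ p s a v).mpr ⟨?_, ?_⟩
    · have : wnorm θ p s a v ≤ wnorm θ p s a u + ENNReal.ofReal r := by
        rw [wnorm_eq]; exact iSup_le htermv
      exact ne_top_of_le_ne_top (by simp [hufin]) this
    · have key : ∀ j : ℤ,
          (⨅ k : ℤ, ENNReal.ofReal (‖u k‖ * Wt θ p s a k)) - ENNReal.ofReal r ≤
            ENNReal.ofReal (‖v j‖ * Wt θ p s a j) := by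
        intro j
        rw [tsub_le_iff_right]
        calc (⨅ k : ℤ, ENNReal.ofReal (‖u k‖ * Wt θ p s a k))
            ≤ ENNReal.ofReal (‖u j‖ * Wt θ p s a j) :=
              iInf_le (fun k => ENNReal.ofReal (‖u k‖ * Wt θ p s a k)) j
          _ ≤ ENNReal.ofReal (‖v j‖ * Wt θ p s a j)
              + ENNReal.ofReal (‖u j - v j‖ * Wt θ p s a j) :=
              lbs_tri _ _ _ (Wt_pos θ p s a j).le
          _ ≤ ENNReal.ofReal (‖v j‖ * Wt θ p s a j) + ENNReal.ofReal r := by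
              refine add_le_add (le_refl _) (le_trans ?_ hv)
              rw [wnorm_eq, norm_sub_rev]
              exact le_iSup (fun j => ENNReal.ofReal (‖v j - u j‖ * Wt θ p s a j)) j
      calc (0 : ℝ≥0∞)
          < (⨅ k : ℤ, ENNReal.ofReal (‖u k‖ * Wt θ p s a k)) - ENNReal.ofReal r :=
            tsub_pos_iff_lt.mpr hrm
        _ ≤ ⨅ j : ℤ, ENNReal.ofReal (‖v j‖ * Wt θ p s a j) := le_iInf key
  · -- density
    intro u hu ε hε
    classical
    set v : ℤ → ℂ := fun j =>
      if ε / 2 ≤ ‖u j‖ * Wt θ p s a j then u j else ((ε / 2 / Wt θ p s a j : ℝ) : ℂ) with hvdef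
    have hvpos : ∀ j : ℤ, ¬ ε / 2 ≤ ‖u j‖ * Wt θ p s a j →
        ‖v j‖ = ε / 2 / Wt θ p s a j := by
      intro j h
      have hvj : v j = ((ε / 2 / Wt θ p s a j : ℝ) : ℂ) := by
        simp only [hvdef]; rw [if_neg h]
      rw [hvj, Complex.norm_real, Real.norm_eq_abs,
        abs_of_nonneg (div_nonneg (by positivity) (Wt_pos θ p s a j).le)]
    have hveq : ∀ j : ℤ, ε / 2 ≤ ‖u j‖ * Wt θ p s a j → v j = u j := by
      intro j h
      simp only [hvdef]; rw [if_pos h]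
    have hvlb : ∀ j : ℤ, ε / 2 ≤ ‖v j‖ * Wt θ p s a j := by
      intro j
      by_cases h : ε / 2 ≤ ‖u j‖ * Wt θ p s a j
      · rw [hveq j h]; exact h
      · rw [hvpos j h, div_mul_cancel₀ _ (Wt_pos θ p s a j).ne']
    have hdiff : ∀ j : ℤ, ‖v j - u j‖ * Wt θ p s a j ≤ ε := by
      intro j
      by_cases h : ε / 2 ≤ ‖u j‖ * Wt θ p s a j
      · rw [hveq j h]
        simp only [sub_self, norm_zero, zero_mul]
        exact hε.le
      · have hW := Wt_pos θ p s a j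
        have h1 : ‖v j‖ * Wt θ p s a j = ε / 2 := by
          rw [hvpos j h, div_mul_cancel₀ _ hW.ne']
        have h2 : ‖v j - u j‖ ≤ ‖v j‖ + ‖u j‖ := norm_sub_le _ _
        have h3 : ‖u j‖ * Wt θ p s a j ≤ ε / 2 := (not_le.mp h).le
        nlinarith [norm_nonneg (v j - u j)]
    have hvu : wnorm θ p s a (fun j => v j - u j) ≤ ENNReal.ofReal ε := by
      rw [wnorm_eq]
      exact iSup_le fun j => ENNReal.ofReal_le_ofReal (hdiff j)
    refine ⟨v, (mem_lowerBddSet_iff θ p s a v).mpr ⟨?_, ?_⟩, hvu⟩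
    · have : wnorm θ p s a v ≤ wnorm θ p s a u + ENNReal.ofReal ε := by
        rw [wnorm_eq]
        refine iSup_le fun j => ?_
        calc ENNReal.ofReal (‖v j‖ * Wt θ p s a j)
            ≤ ENNReal.ofReal (‖u j‖ * Wt θ p s a j)
              + ENNReal.ofReal (‖v j - u j‖ * Wt θ p s a j) :=
              lbs_tri _ _ _ (Wt_pos θ p s a j).le
          _ ≤ wnorm θ p s a u + ENNReal.ofReal ε := by
              refine add_le_add ?_ (ENNReal.ofReal_le_ofReal (hdiff j))
              rw [wnorm_eq]
              exact le_iSup (fun j => ENNReal.ofReal (‖u j‖ * Wt θ p s a j)) j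
      exact ne_top_of_le_ne_top (by simp [hu]) this
    · calc (0 : ℝ≥0∞) < ENNReal.ofReal (ε / 2) := ENNReal.ofReal_pos.mpr (by positivity)
        _ ≤ ⨅ j : ℤ, ENNReal.ofReal (‖v j‖ * Wt θ p s a j) :=
            le_iInf fun j => ENNReal.ofReal_le_ofReal (hvlb j)


end
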